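/- Define trilinear forms on ℝ⁴: T₃(x,y,z) = (z₁+z₂)T₂(x,y) + (z₁-z₂)T₂(B²x, B²y), where T₂(x,y)=x₁y₁+x₁y₂+x₂y₁-x₂y₂ and B is the backward shift on ℝ⁴ (so B²x = (x₃,x₄,0,0)). Then the supremum norm of T₃ over the unit ball of (ℓ∞⁴)³ equals 4. -/
import Mathlib


/-- `T₂` acting on the first two coordinates of vectors in `ℝ⁴`. -/
def T2 (x y : Fin 4 → ℝ) : ℝ := x 0 * y 0 + x 0 * y 1 + x 1 * y 0 - x 1 * y 1

/-- The square of the backward shift on `ℝ⁴`: `B²x = (x₃, x₄, 0, 0)`. -/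
def Bsq (x : Fin 4 → ℝ) : Fin 4 → ℝ :=
  fun i => if h : (i : ℕ) + 2 < 4 then x ⟨(i : ℕ) + 2, h⟩ else 0

/-- The trilinear form `T₃(x,y,z) = (z₁+z₂)T₂(x,y) + (z₁-z₂)T₂(B²x, B²y)` on `(ℝ⁴)³`. -/
def T3 (x y z : Fin 4 → ℝ) : ℝ :=
  (z 0 + z 1) * T2 x y + (z 0 - z 1) * T2 (Bsq x) (Bsq y)

lemma auxA (a b c d : ℝ) (ha : |a| ≤ 1) (hb : |b| ≤ 1) (hc : |c| ≤ 1) (hd : |d| ≤ 1) :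
    |a * c + a * d + b * c - b * d| ≤ 2 := by
  rw [abs_le] at *
  constructor <;> nlinarith [mul_nonneg (by linarith : (0:ℝ) ≤ 1 - a) (by linarith : (0:ℝ) ≤ 1 - c),
    mul_nonneg (by linarith : (0:ℝ) ≤ 1 - a) (by linarith : (0:ℝ) ≤ 1 + c),
    mul_nonneg (by linarith : (0:ℝ) ≤ 1 + a) (by linarith : (0:ℝ) ≤ 1 - c),
    mul_nonneg (by linarith : (0:ℝ) ≤ 1 + a) (by linarith : (0:ℝ) ≤ 1 + c),
    mul_nonneg (by linarith : (0:ℝ) ≤ 1 - b) (by linarith : (0:ℝ) ≤ 1 - d),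
    mul_nonneg (by linarith : (0:ℝ) ≤ 1 - b) (by linarith : (0:ℝ) ≤ 1 + d),
    mul_nonneg (by linarith : (0:ℝ) ≤ 1 + b) (by linarith : (0:ℝ) ≤ 1 - d),
    mul_nonneg (by linarith : (0:ℝ) ≤ 1 + b) (by linarith : (0:ℝ) ≤ 1 + d),
    mul_nonneg (by linarith : (0:ℝ) ≤ 1 - a) (by linarith : (0:ℝ) ≤ 1 - d),
    mul_nonneg (by linarith : (0:ℝ) ≤ 1 + a) (by linarith : (0:ℝ) ≤ 1 + d),
    mul_nonneg (by linarith : (0:ℝ) ≤ 1 - b) (by linarith : (0:ℝ) ≤ 1 - c),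
    mul_nonneg (by linarith : (0:ℝ) ≤ 1 + b) (by linarith : (0:ℝ) ≤ 1 + c)]

lemma auxUB (x y z : Fin 4 → ℝ) (hx : ‖x‖ ≤ 1) (hy : ‖y‖ ≤ 1) (hz : ‖z‖ ≤ 1) :
    |T3 x y z| ≤ 4 := by
  have bx : ∀ i, |x i| ≤ 1 := fun i => (norm_le_pi_norm x i).trans hx
  have by' : ∀ i, |y i| ≤ 1 := fun i => (norm_le_pi_norm y i).trans hy
  have bz : ∀ i, |z i| ≤ 1 := fun i => (norm_le_pi_norm z i).trans hz
  have h1 : |T2 x y| ≤ 2 := auxA _ _ _ _ (bx 0) (bx 1) (by' 0) (by' 1)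
  have h2 : |T2 (Bsq x) (Bsq y)| ≤ 2 := by
    have : T2 (Bsq x) (Bsq y) = x 2 * y 2 + x 2 * y 3 + x 3 * y 2 - x 3 * y 3 := by
      simp [T2, Bsq]
    rw [this]
    exact auxA _ _ _ _ (bx 2) (bx 3) (by' 2) (by' 3)
  have hzz : |z 0 + z 1| + |z 0 - z 1| ≤ 2 := by
    have h0 := bz 0; have h1 := bz 1
    rw [abs_le] at h0 h1
    rcases abs_cases (z 0 + z 1) with ⟨e1, _⟩ | ⟨e1, _⟩ <;>
      rcases abs_cases (z 0 - z 1) with ⟨e2, _⟩ | ⟨e2, _⟩ <;> rw [e1, e2] <;> linarith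
  calc |T3 x y z| ≤ |z 0 + z 1| * |T2 x y| + |z 0 - z 1| * |T2 (Bsq x) (Bsq y)| := by
        rw [T3]
        refine (abs_add_le _ _).trans ?_
        rw [abs_mul, abs_mul]
    _ ≤ |z 0 + z 1| * 2 + |z 0 - z 1| * 2 := by
        gcongr
    _ ≤ 4 := by linarith

/-- The supremum of `|T₃|` over the unit ball of `(ℓ∞⁴)³` equals `4`. -/
theorem stmt_3 :
    sSup {v : ℝ | ∃ x y z : Fin 4 → ℝ, ‖x‖ ≤ 1 ∧ ‖y‖ ≤ 1 ∧ ‖z‖ ≤ 1 ∧ v = |T3 x y z|}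
      = 4 := by
  have hmem : (4 : ℝ) ∈ {v : ℝ | ∃ x y z : Fin 4 → ℝ, ‖x‖ ≤ 1 ∧ ‖y‖ ≤ 1 ∧ ‖z‖ ≤ 1 ∧ v = |T3 x y z|} := by
    refine ⟨(fun _ => 1), ![1,0,1,0], ![1,0,0,0], ?_, ?_, ?_, ?_⟩
    · apply pi_norm_le_iff_of_nonneg (by norm_num) |>.2
      intro i; simp
    · apply pi_norm_le_iff_of_nonneg (by norm_num) |>.2
      intro i; fin_cases i <;> simp
    · apply pi_norm_le_iff_of_nonneg (by norm_num) |>.2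
      intro i; fin_cases i <;> simp
    · simp [T3, T2, Bsq]
      norm_num
  apply le_antisymm
  · apply csSup_le ⟨4, hmem⟩
    rintro v ⟨x, y, z, hx, hy, hz, rfl⟩
    exact auxUB x y z hx hy hz
  · exact le_csSup ⟨4, by rintro v ⟨x, y, z, hx, hy, hz, rfl⟩; exact auxUB x y z hx hy hz⟩ hmem
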